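/- Let k be an integrable Mercer kernel on 𝕋 = [0,∞) with RKHS H, let 0 ≤ a < b < ∞, and let f ∈ H be the element given by f(s) = ∫_a^b k(s,t) dt. Then for every g ∈ H one has ∫_a^b g(t) dt = ⟨f, g⟩_H. -/

import Mathlib

open scoped InnerProductSpace
open MeasureTheory Set

/-- For an integrable Mercer kernel `k` on `[0,∞)` with RKHS `H`,
`0 ≤ a < b < ∞`, and `f ∈ H` with `f(s) = ∫_a^b k(s,t) dt`, every `g ∈ H` satisfies
`∫_a^b g(t) dt = ⟪f, g⟫`. -/
theorem stmt_4
    {H : Type*} [NormedAddCommGroup H] [InnerProductSpace ℝ H] [CompleteSpace H]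
    (k : ℝ → ℝ → ℝ)
    (hcont : ContinuousOn (fun p : ℝ × ℝ => k p.1 p.2) (Ici 0 ×ˢ Ici 0))
    (hsymm : ∀ s ∈ Ici (0:ℝ), ∀ t ∈ Ici (0:ℝ), k s t = k t s)
    (hpsd : ∀ (n : ℕ) (t : Fin n → ℝ), (∀ i, 0 ≤ t i) →
      ∀ a : Fin n → ℝ, 0 ≤ ∑ i, ∑ j, a i * a j * k (t i) (t j))
    (hint : IntegrableOn (fun p : ℝ × ℝ => k p.1 p.2) (Ici 0 ×ˢ Ici 0))
    (ι : H →ₗ[ℝ] (ℝ → ℝ))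
    (hι : ∀ g₁ g₂ : H, (∀ t ∈ Ici (0:ℝ), ι g₁ t = ι g₂ t) → g₁ = g₂)
    (K : ℝ → H) (hK : ∀ t ∈ Ici (0:ℝ), ∀ s ∈ Ici (0:ℝ), ι (K t) s = k t s)
    (hrep : ∀ g : H, ∀ t ∈ Ici (0:ℝ), ⟪g, K t⟫_ℝ = ι g t)
    (a b : ℝ) (ha : 0 ≤ a) (hab : a < b)
    (f : H) (hf : ∀ s ∈ Ici (0:ℝ), ι f s = ∫ t in Icc a b, k s t) :
    ∀ g : H, ∫ t in Icc a b, ι g t = ⟪f, g⟫_ℝ := by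

  -- basic set inclusions
  have hsub : Icc a b ⊆ Ici (0:ℝ) := fun x hx => le_trans ha hx.1
  -- K is continuous on Icc a b
  have hinner : ∀ s ∈ Ici (0:ℝ), ∀ t ∈ Ici (0:ℝ), ⟪K s, K t⟫_ℝ = k s t := by
    intro s hs t ht
    rw [hrep (K s) t ht, hK s hs t ht]
  have hnorm : ∀ s ∈ Ici (0:ℝ), ∀ t ∈ Ici (0:ℝ),
      ‖K s - K t‖ ^ 2 = k s s - k s t - k t s + k t t := by
    intro s hs t ht
    rw [← real_inner_self_eq_norm_sq, inner_sub_left, inner_sub_right, inner_sub_right,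
      hinner s hs s hs, hinner s hs t ht, hinner t ht s hs, hinner t ht t ht]
    ring
  have hKcont : ContinuousOn K (Icc a b) := by
    intro t ht
    have ht0 : t ∈ Ici (0:ℝ) := hsub ht
    set h : ℝ → ℝ := fun s => k s s - k s t - k t s + k t t with hh
    have hhc : ContinuousOn h (Icc a b) := by
      have c1 : ContinuousOn (fun s : ℝ => k s s) (Icc a b) :=
        hcont.comp (continuousOn_id.prodMk continuousOn_id)
          (fun x hx => ⟨hsub hx, hsub hx⟩)
      have c2 : ContinuousOn (fun s : ℝ => k s t) (Icc a b) :=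
        hcont.comp (continuousOn_id.prodMk continuousOn_const)
          (fun x hx => ⟨hsub hx, ht0⟩)
      have c3 : ContinuousOn (fun s : ℝ => k t s) (Icc a b) :=
        hcont.comp (continuousOn_const.prodMk continuousOn_id)
          (fun x hx => ⟨ht0, hsub hx⟩)
      exact ((c1.sub c2).sub c3).add continuousOn_const
    have hdist : ∀ s ∈ Icc a b, dist (K s) (K t) = Real.sqrt (h s) := by
      intro s hs
      have := hnorm s (hsub hs) t ht0
      rw [dist_eq_norm, ← Real.sqrt_sq (norm_nonneg (K s - K t)), this]
    have h0 : h t = 0 := by simp [hh]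
    rw [Metric.continuousWithinAt_iff]
    intro ε hε
    have hsq : ContinuousWithinAt (fun s => Real.sqrt (h s)) (Icc a b) t :=
      Real.continuous_sqrt.continuousAt.comp_continuousWithinAt (hhc t ht)
    have := Metric.continuousWithinAt_iff.mp hsq ε hε
    obtain ⟨δ, hδ, hδ'⟩ := this
    refine ⟨δ, hδ, fun {x} hx hxd => ?_⟩
    have := hδ' hx hxd
    rw [hdist x hx]
    simpa [h0, Real.dist_eq, abs_of_nonneg (Real.sqrt_nonneg _)] using this
  have hKint : IntegrableOn K (Icc a b) := hKcont.integrableOn_Icc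
  set F : H := ∫ t in Icc a b, K t with hF
  have hfF : f = F := by
    apply hι
    intro s hs
    rw [hf s hs, ← hrep F s hs]
    have : ⟪F, K s⟫_ℝ = ⟪K s, F⟫_ℝ := real_inner_comm _ _
    rw [this, hF, ← integral_inner hKint (K s)]
    refine setIntegral_congr_fun measurableSet_Icc (fun t ht => ?_)
    rw [hinner s hs t (hsub ht)]
  intro g
  have h1 : ∫ t in Icc a b, ι g t = ∫ t in Icc a b, ⟪g, K t⟫_ℝ := by
    refine setIntegral_congr_fun measurableSet_Icc (fun t ht => ?_)
    rw [hrep g t (hsub ht)]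
  rw [h1, integral_inner hKint g, ← hF, ← hfF, real_inner_comm]
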